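/- Let n ≥ 1 and let C be an n×n real matrix with nonnegative entries, and let P = diag(Ĉe)^{-1} Ĉ be the row-normalization of the augmented citation matrix Ĉ. Then there exists a unique vector x ∈ ℝ^{n+1} such that x_i > 0 for every i, ∑_i x_i = 1, and xᵀ P = xᵀ (the Perron vector of P). -/

import Mathlib

/-- The augmented citation matrix `Ĉ`: a dummy node `n+1` is added which cites
and is cited by all existing nodes, but not itself. -/
def hatC {n : ℕ} (C : Matrix (Fin n) (Fin n) ℝ) :
    Matrix (Fin (n + 1)) (Fin (n + 1)) ℝ := fun i j =>
  if hi : (i : ℕ) < n then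
    if hj : (j : ℕ) < n then C ⟨i, hi⟩ ⟨j, hj⟩ else 1
  else if (j : ℕ) < n then 1 else 0

/-- Row-normalization `P = diag(Ĉe)⁻¹ Ĉ` of a matrix. -/
noncomputable def rowNorm {ι : Type*} [Fintype ι] [DecidableEq ι] (A : Matrix ι ι ℝ) :
    Matrix ι ι ℝ :=
  Matrix.diagonal (fun i => (∑ j, A i j)⁻¹) * A

theorem stmt_12 {n : ℕ} (hn : 1 ≤ n) (C : Matrix (Fin n) (Fin n) ℝ)
    (hC : ∀ i j, 0 ≤ C i j) :
    ∃! x : Fin (n + 1) → ℝ,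
      (∀ i, 0 < x i) ∧ (∑ i, x i = 1) ∧
        Matrix.vecMul x (rowNorm (hatC C)) = x := by
  set A : Matrix (Fin (n+1)) (Fin (n+1)) ℝ := hatC C with hAdef
  set P : Matrix (Fin (n+1)) (Fin (n+1)) ℝ := rowNorm A with hPdef
  have hAnn : ∀ i j, 0 ≤ A i j := by
    intro i j
    simp only [hAdef, hatC]
    split_ifs <;> first | exact hC _ _ | norm_num
  have hAlast : ∀ i : Fin (n+1), (i : ℕ) < n → A i (Fin.last n) = 1 := by
    intro i hi
    simp [hAdef, hatC, hi]
  have hArow : ∀ j : Fin (n+1), (j : ℕ) < n → A (Fin.last n) j = 1 := by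
    intro j hj
    simp [hAdef, hatC, hj]
  have hs : ∀ i, 0 < ∑ j, A i j := by
    intro i
    apply Finset.sum_pos' (fun j _ => hAnn i j)
    by_cases hi : (i : ℕ) < n
    · exact ⟨Fin.last n, Finset.mem_univ _, by rw [hAlast i hi]; norm_num⟩
    · refine ⟨⟨0, by omega⟩, Finset.mem_univ _, ?_⟩
      have hi' : i = Fin.last n := Fin.ext (by have := i.isLt; simp [Fin.last]; omega)
      subst hi'
      rw [hArow ⟨0, by omega⟩ (by show 0 < n; omega)]
      norm_num
  have hPapp : ∀ i j, P i j = (∑ k, A i k)⁻¹ * A i j := by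
    intro i j
    rw [hPdef, rowNorm, Matrix.diagonal_mul]
  have hPnn : ∀ i j, 0 ≤ P i j := by
    intro i j
    rw [hPapp]
    exact mul_nonneg (inv_nonneg.2 (hs i).le) (hAnn i j)
  have hPsum : ∀ i, ∑ j, P i j = 1 := by
    intro i
    have : ∑ j, P i j = (∑ k, A i k)⁻¹ * ∑ j, A i j := by
      rw [Finset.mul_sum]
      exact Finset.sum_congr rfl fun j _ => hPapp i j
    rw [this, inv_mul_cancel₀ (hs i).ne']
  have hPcol : ∀ i : Fin (n+1), (i : ℕ) < n → 0 < P i (Fin.last n) := by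
    intro i hi
    rw [hPapp, hAlast i hi, mul_one]
    exact inv_pos.2 (hs i)
  have hProw : ∀ j : Fin (n+1), (j : ℕ) < n → 0 < P (Fin.last n) j := by
    intro j hj
    rw [hPapp, hArow j hj, mul_one]
    exact inv_pos.2 (hs _)
  have hvm : ∀ (v : Fin (n+1) → ℝ) j, Matrix.vecMul v P j = ∑ i, v i * P i j := by
    intro v j
    simp [Matrix.vecMul, dotProduct]
  -- absolute value of an eigenvector is an eigenvector, with columnwise equality
  have habs : ∀ v : Fin (n+1) → ℝ, Matrix.vecMul v P = v →
      ∀ j, |v j| = ∑ i, |v i| * P i j := by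
    intro v hv
    have hle : ∀ j, |v j| ≤ ∑ i, |v i| * P i j := by
      intro j
      calc |v j| = |∑ i, v i * P i j| := by rw [← hvm v j, hv]
        _ ≤ ∑ i, |v i * P i j| := Finset.abs_sum_le_sum_abs _ _
        _ = ∑ i, |v i| * P i j := by
            refine Finset.sum_congr rfl fun i _ => ?_
            rw [abs_mul, abs_of_nonneg (hPnn i j)]
    have hsumeq : ∑ j, (∑ i, |v i| * P i j) = ∑ j, |v j| := by
      rw [Finset.sum_comm]
      refine Finset.sum_congr rfl fun i _ => ?_
      rw [← Finset.mul_sum, hPsum i, mul_one]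
    intro j
    by_contra hne
    have hlt : ∑ k, |v k| < ∑ k, ∑ i, |v i| * P i k :=
      Finset.sum_lt_sum (fun k _ => hle k)
        ⟨j, Finset.mem_univ j, lt_of_le_of_ne (hle j) hne⟩
    linarith [hsumeq]
  -- a nonnegative nonzero eigenvector is positive
  have hpos : ∀ v : Fin (n+1) → ℝ, (∀ i, 0 ≤ v i) → Matrix.vecMul v P = v → v ≠ 0 →
      ∀ i, 0 < v i := by
    intro v hvnn hv hv0
    have hex : ∃ i, 0 < v i := by
      by_contra h
      push_neg at h
      exact hv0 (funext fun i => le_antisymm (h i) (hvnn i))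
    obtain ⟨i0, hi0⟩ := hex
    have hlast : 0 < v (Fin.last n) := by
      by_cases hi : (i0 : ℕ) < n
      · have h1 : v (Fin.last n) = ∑ i, v i * P i (Fin.last n) := by
          rw [← hvm, hv]
        rw [h1]
        exact Finset.sum_pos' (fun i _ => mul_nonneg (hvnn i) (hPnn _ _))
          ⟨i0, Finset.mem_univ _, mul_pos hi0 (hPcol i0 hi)⟩
      · have hi' : i0 = Fin.last n := Fin.ext (by have := i0.isLt; simp [Fin.last]; omega)
        rwa [hi'] at hi0
    intro i
    by_cases hi : (i : ℕ) < n
    · have h1 : v i = ∑ k, v k * P k i := by rw [← hvm, hv]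
      rw [h1]
      exact Finset.sum_pos' (fun k _ => mul_nonneg (hvnn k) (hPnn _ _))
        ⟨Fin.last n, Finset.mem_univ _, mul_pos hlast (hProw i hi)⟩
    · have hi' : i = Fin.last n := Fin.ext (by have := i.isLt; simp [Fin.last]; omega)
      rwa [hi']
  -- existence of a nonzero eigenvector
  have hone : Matrix.mulVec (P - 1) (fun _ => (1:ℝ)) = 0 := by
    rw [Matrix.sub_mulVec, Matrix.one_mulVec]
    funext i
    simp [Matrix.mulVec, dotProduct, hPsum i]
  have hdet : (P - 1).det = 0 := by
    rw [← Matrix.exists_mulVec_eq_zero_iff]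
    refine ⟨fun _ => (1:ℝ), ?_, hone⟩
    intro h
    simpa using congrFun h 0
  have hdetT : (Matrix.transpose (P - 1)).det = 0 := by rwa [Matrix.det_transpose]
  obtain ⟨v, hv0, hv⟩ := (Matrix.exists_mulVec_eq_zero_iff).mpr hdetT
  have hveig : Matrix.vecMul v P = v := by
    have h1 : (Matrix.transpose P - 1).mulVec v = 0 := by
      rwa [Matrix.transpose_sub, Matrix.transpose_one] at hv
    have h2 : (Matrix.transpose P).mulVec v - v = 0 := by
      rwa [Matrix.sub_mulVec, Matrix.one_mulVec] at h1
    have h3 : (Matrix.transpose P).mulVec v = v := by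
      funext j; have := congrFun h2 j; simpa [sub_eq_zero] using this
    rw [← Matrix.mulVec_transpose]
    exact h3
  set w : Fin (n+1) → ℝ := fun i => |v i| with hwdef
  have hweig : Matrix.vecMul w P = w := by
    funext j
    rw [hvm]
    exact (habs v hveig j).symm
  have hw0 : w ≠ 0 := by
    intro h
    apply hv0
    funext i
    have := congrFun h i
    simpa [hwdef, abs_eq_zero] using this
  have hwpos : ∀ i, 0 < w i := hpos w (fun i => abs_nonneg _) hweig hw0
  set S : ℝ := ∑ i, w i with hSdef
  have hSpos : 0 < S := Finset.sum_pos (fun i _ => hwpos i) Finset.univ_nonempty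
  set x : Fin (n+1) → ℝ := fun i => S⁻¹ * w i with hxdef
  have hx1 : ∀ i, 0 < x i := fun i => mul_pos (inv_pos.2 hSpos) (hwpos i)
  have hx2 : ∑ i, x i = 1 := by
    rw [hxdef]
    simp only []
    rw [← Finset.mul_sum, ← hSdef, inv_mul_cancel₀ hSpos.ne']
  have hx3 : Matrix.vecMul x P = x := by
    funext j
    rw [hvm]
    have : ∑ i, x i * P i j = S⁻¹ * ∑ i, w i * P i j := by
      rw [Finset.mul_sum]
      exact Finset.sum_congr rfl fun i _ => by rw [hxdef]; ring
    rw [this, ← hvm, hweig]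
  refine ⟨x, ⟨hx1, hx2, hx3⟩, ?_⟩
  rintro y ⟨hy1, hy2, hy3⟩
  -- uniqueness
  by_contra hne
  set z : Fin (n+1) → ℝ := fun i => y i - x i with hzdef
  have hzne : z ≠ 0 := by
    intro h
    apply hne
    funext i
    have := congrFun h i
    simp only [hzdef, Pi.zero_apply, sub_eq_zero] at this
    exact this
  have hzeig : Matrix.vecMul z P = z := by
    funext j
    rw [hvm]
    have : ∑ i, z i * P i j = (∑ i, y i * P i j) - ∑ i, x i * P i j := by
      rw [← Finset.sum_sub_distrib]
      exact Finset.sum_congr rfl fun i _ => by rw [hzdef]; ring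
    rw [this, ← hvm, ← hvm, hy3, hx3]
  have hzsum : ∑ i, z i = 0 := by
    rw [hzdef]
    simp only []
    rw [Finset.sum_sub_distrib, hy2, hx2, sub_self]
  have hzabs : ∀ j, |z j| = ∑ i, |z i| * P i j := habs z hzeig
  have hzw : ∀ i, 0 < |z i| := by
    apply hpos (fun i => |z i|) (fun i => abs_nonneg _)
    · funext j
      rw [hvm]
      exact (hzabs j).symm
    · intro h
      apply hzne
      funext i
      have := congrFun h i
      simpa [abs_eq_zero] using this
  have hznz : ∀ i, z i ≠ 0 := fun i => abs_pos.mp (hzw i)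
  -- equality in the triangle inequality at column `last`
  set a : Fin (n+1) → ℝ := fun i => z i * P i (Fin.last n) with hadef
  have hza : z (Fin.last n) = ∑ i, a i := by rw [← hvm, hzeig]
  have haa : |∑ i, a i| = ∑ i, |a i| := by
    rw [← hza]
    have := hzabs (Fin.last n)
    rw [this]
    exact Finset.sum_congr rfl fun i _ => by
      rw [hadef]
      simp only []
      rw [abs_mul, abs_of_nonneg (hPnn _ _)]
  have hsign : (∀ i, 0 ≤ a i) ∨ (∀ i, a i ≤ 0) := by
    rcases le_or_gt 0 (∑ i, a i) with h | h
    · left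
      have h1 : ∑ i, (|a i| - a i) = 0 := by
        rw [Finset.sum_sub_distrib, ← haa, abs_of_nonneg h, sub_self]
      intro i
      have h2 := (Finset.sum_eq_zero_iff_of_nonneg
        (fun i _ => by simp [abs_nonneg, le_abs_self, sub_nonneg] : ∀ i ∈ Finset.univ, 0 ≤ |a i| - a i)).mp h1 i (Finset.mem_univ i)
      have h3 : |a i| = a i := by linarith
      rw [← h3]; exact abs_nonneg _
    · right
      have h1 : ∑ i, (|a i| + a i) = 0 := by
        rw [Finset.sum_add_distrib, ← haa, abs_of_neg h]
        ring
      intro i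
      have h2 := (Finset.sum_eq_zero_iff_of_nonneg
        (fun i _ => by linarith [neg_abs_le (a i)] : ∀ i ∈ Finset.univ, 0 ≤ |a i| + a i)).mp h1 i (Finset.mem_univ i)
      linarith [abs_nonneg (a i)]
  have hzposneg : (∀ i, 0 < z i) ∨ (∀ i, z i < 0) := by
    have key : ∀ i : Fin (n+1), (i : ℕ) < n → (0 ≤ a i ↔ 0 ≤ z i) := by
      intro i hi
      rw [hadef]
      simp only []
      constructor
      · intro h
        by_contra hzn
        push_neg at hzn
        nlinarith [hPcol i hi]
      · intro h
        exact mul_nonneg h (hPnn _ _)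
    rcases hsign with h | h
    · left
      have hlt : ∀ i : Fin (n+1), (i : ℕ) < n → 0 < z i := by
        intro i hi
        exact lt_of_le_of_ne ((key i hi).mp (h i)) (Ne.symm (hznz i))
      have hlast : 0 < z (Fin.last n) := by
        rw [hza]
        refine Finset.sum_pos' (fun i _ => h i) ⟨⟨0, by omega⟩, Finset.mem_univ _, ?_⟩
        rw [hadef]
        exact mul_pos (hlt ⟨0, by omega⟩ (by show 0 < n; omega)) (hPcol _ (by show 0 < n; omega))
      intro i
      by_cases hi : (i : ℕ) < n
      · exact hlt i hi
      · have hi' : i = Fin.last n := Fin.ext (by have := i.isLt; simp [Fin.last]; omega)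
        rwa [hi']
    · right
      have hlt : ∀ i : Fin (n+1), (i : ℕ) < n → z i < 0 := by
        intro i hi
        rcases lt_or_ge (z i) 0 with h' | h'
        · exact h'
        · exfalso
          have : 0 ≤ a i := (key i hi).mpr h'
          have : a i = 0 := le_antisymm (h i) this
          rw [hadef] at this
          simp only [] at this
          rcases mul_eq_zero.mp this with h'' | h''
          · exact hznz i h''
          · exact (hPcol i hi).ne' h''
      have hlast : z (Fin.last n) < 0 := by
        rw [hza]
        have hneg : 0 < ∑ i, -a i := by
          refine Finset.sum_pos' (fun i _ => by linarith [h i]) ?_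
          refine ⟨⟨0, by omega⟩, Finset.mem_univ _, ?_⟩
          rw [hadef]
          have h1 := hlt ⟨0, by omega⟩ (by show 0 < n; omega)
          have h2 := hPcol (⟨0, by omega⟩ : Fin (n+1)) (by show 0 < n; omega)
          simp only [neg_pos]
          exact mul_neg_of_neg_of_pos h1 h2
        rw [Finset.sum_neg_distrib] at hneg
        linarith
      intro i
      by_cases hi : (i : ℕ) < n
      · exact hlt i hi
      · have hi' : i = Fin.last n := Fin.ext (by have := i.isLt; simp [Fin.last]; omega)
        rwa [hi']
  rcases hzposneg with h | h
  · have : 0 < ∑ i, z i := Finset.sum_pos (fun i _ => h i) Finset.univ_nonempty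
    linarith [hzsum]
  · have : 0 < ∑ i, -z i := Finset.sum_pos (fun i _ => by linarith [h i]) Finset.univ_nonempty
    rw [Finset.sum_neg_distrib] at this
    linarith [hzsum]
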